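/- Let 0 < p < 1, q = 1 - p, and consider the random walk weakly reflected at the origin: S_0 = 0 and S_j = max(S_{j-1} + X_j, 0) for j ≥ 1, with M_n = max_{0≤j≤n} S_j. Then for every real λ with |λ| < 1, the series Σ_{n=1}^∞ λ^n · P{M_n = 1} converges and equals pλ/((1 - qλ)(1 - qλ - pqλ²)). -/

import Mathlib

open Finset Filter

/-- The value `±1` of a single step of the walk, driven by a Boolean. -/
def step (b : Bool) : ℤ := if b then 1 else -1

/-- The probability weight of the path `ω` when `P{Xᵢ = 1} = p`, `P{Xᵢ = -1} = 1 - p`,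
independently over `i`. -/
def wt (p : ℝ) {n : ℕ} (ω : Fin n → Bool) : ℝ :=
  ∏ i, if ω i then p else 1 - p

/-- The probability of an event `A` for a walk of length `n`. -/
noncomputable def prob (p : ℝ) {n : ℕ} (A : Set (Fin n → Bool)) : ℝ :=
  ∑ ω : Fin n → Bool, A.indicator (wt p) ω

/-- The walk weakly reflected at the origin: `S_0 = 0`, `S_{j+1} = max(S_j + X_{j+1}, 0)`. -/
def walkWeak {n : ℕ} (ω : Fin n → Bool) : ℕ → ℤ
  | 0 => 0
  | j + 1 => max (walkWeak ω j + if h : j < n then step (ω ⟨j, h⟩) else 0) 0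

/-- The running maximum `M_n = max_{0 ≤ j ≤ n} S_j` of the weakly reflected walk. -/
def mWeak {n : ℕ} (ω : Fin n → Bool) : ℤ :=
  (Finset.range (n + 1)).sup' (by simp) (walkWeak ω)

section aux
variable {n : ℕ}

lemma walkWeak_nonneg (ω : Fin n → Bool) : ∀ j, 0 ≤ walkWeak ω j
  | 0 => le_refl 0
  | j + 1 => le_max_right _ _

lemma walkWeak_le_mWeak (ω : Fin n → Bool) {j : ℕ} (hj : j ≤ n) :
    walkWeak ω j ≤ mWeak ω :=
  Finset.le_sup' _ (Finset.mem_range.2 (by omega))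

lemma mWeak_nonneg (ω : Fin n → Bool) : 0 ≤ mWeak ω :=
  walkWeak_le_mWeak ω (Nat.zero_le n)

lemma walkWeak_snoc (ω : Fin n → Bool) (b : Bool) :
    ∀ j, j ≤ n → walkWeak (Fin.snoc ω b) j = walkWeak ω j
  | 0, _ => rfl
  | j + 1, hj => by
    have hj' : j < n := hj
    show max _ 0 = max _ 0
    rw [walkWeak_snoc ω b j (le_of_lt hj'), dif_pos (show j < n + 1 by omega), dif_pos hj']
    have : (Fin.snoc ω b : Fin (n+1) → Bool) ⟨j, by omega⟩ = ω ⟨j, hj'⟩ := by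
      simp [Fin.snoc, hj']
    rw [this]

lemma walkWeak_snoc_last (ω : Fin n → Bool) (b : Bool) :
    walkWeak (Fin.snoc ω b) (n + 1) = max (walkWeak ω n + step b) 0 := by
  show max _ 0 = _
  rw [dif_pos (Nat.lt_succ_self n), walkWeak_snoc ω b n le_rfl]
  have : (Fin.snoc ω b : Fin (n+1) → Bool) ⟨n, Nat.lt_succ_self n⟩ = b := by
    have h : (⟨n, Nat.lt_succ_self n⟩ : Fin (n+1)) = Fin.last n := rfl
    rw [h, Fin.snoc_last]
  rw [this]

lemma mWeak_snoc (ω : Fin n → Bool) (b : Bool) :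
    mWeak (Fin.snoc ω b) = max (mWeak ω) (walkWeak (Fin.snoc ω b) (n + 1)) := by
  apply le_antisymm
  · apply Finset.sup'_le
    intro j hj
    have hj' : j ≤ n + 1 := Nat.lt_succ_iff.mp (Finset.mem_range.mp hj)
    rcases Nat.lt_succ_iff_lt_or_eq.mp (Nat.lt_succ_of_le hj') with h | h
    · rw [walkWeak_snoc ω b j (Nat.lt_succ_iff.mp h)]
      exact le_trans (walkWeak_le_mWeak ω (Nat.lt_succ_iff.mp h)) (le_max_left _ _)
    · rw [h]; exact le_max_right _ _
  · apply max_le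
    · apply Finset.sup'_le
      intro j hj
      have hj' : j ≤ n := Nat.lt_succ_iff.mp (Finset.mem_range.mp hj)
      rw [← walkWeak_snoc ω b j hj']
      exact Finset.le_sup' _ (Finset.mem_range.mpr (by omega))
    · exact Finset.le_sup' _ (Finset.mem_range.mpr (by omega))

lemma wt_snoc (p : ℝ) (ω : Fin n → Bool) (b : Bool) :
    wt p (Fin.snoc ω b) = wt p ω * (if b then p else 1 - p) := by
  unfold wt
  rw [Fin.prod_univ_castSucc]
  simp

lemma sum_snoc_eq (f : (Fin (n + 1) → Bool) → ℝ) :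
    ∑ ω : Fin (n + 1) → Bool, f ω
      = ∑ ω : Fin n → Bool, (f (Fin.snoc ω false) + f (Fin.snoc ω true)) := by
  rw [← (Fin.snocEquiv (fun _ => Bool)).sum_comp f, Fintype.sum_prod_type_right]
  refine Finset.sum_congr rfl fun ω _ => ?_
  rw [Fintype.sum_bool]
  simp [Fin.snocEquiv]
  ring

end aux

def Alast (n : ℕ) : Set (Fin n → Bool) := {ω | mWeak ω ≤ 1 ∧ walkWeak ω n = 0}
def Blast (n : ℕ) : Set (Fin n → Bool) := {ω | mWeak ω ≤ 1 ∧ walkWeak ω n = 1}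
def Cset (n : ℕ) : Set (Fin n → Bool) := {ω | mWeak ω ≤ 1}

section mem
variable {n : ℕ} (ω : Fin n → Bool)

lemma stepf : step false = -1 := rfl
lemma stept : step true = 1 := rfl

lemma memA_snoc_false : Fin.snoc ω false ∈ Alast (n + 1) ↔ ω ∈ Cset n := by
  have hw0 := walkWeak_nonneg ω n
  have hm0 := mWeak_nonneg ω
  have hwm := walkWeak_le_mWeak ω (le_refl n)
  constructor
  · rintro ⟨h1, -⟩
    rw [mWeak_snoc] at h1
    exact le_trans (le_max_left _ _) h1
  · intro h
    have h' : mWeak ω ≤ 1 := h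
    have hlast : walkWeak (Fin.snoc ω false) (n + 1) = 0 := by
      rw [walkWeak_snoc_last, stepf]
      exact max_eq_right (by omega)
    refine ⟨?_, hlast⟩
    rw [mWeak_snoc, hlast]
    exact max_le h' (by norm_num)

lemma memA_snoc_true : Fin.snoc ω true ∉ Alast (n + 1) := by
  rintro ⟨-, h2⟩
  have hw0 := walkWeak_nonneg ω n
  rw [walkWeak_snoc_last, stept] at h2
  have := le_max_left (walkWeak ω n + 1) (0 : ℤ)
  omega

lemma memB_snoc_true : Fin.snoc ω true ∈ Blast (n + 1) ↔ ω ∈ Alast n := by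
  have hw0 := walkWeak_nonneg ω n
  have hlast : walkWeak (Fin.snoc ω true) (n + 1) = walkWeak ω n + 1 := by
    rw [walkWeak_snoc_last, stept]
    exact max_eq_left (by omega)
  constructor
  · rintro ⟨h1, h2⟩
    rw [mWeak_snoc] at h1
    rw [hlast] at h2
    exact ⟨le_trans (le_max_left _ _) h1, by omega⟩
  · rintro ⟨h1, h2⟩
    refine ⟨?_, by rw [hlast, h2]; norm_num⟩
    rw [mWeak_snoc, hlast, h2]
    exact max_le h1 (by norm_num)

lemma memB_snoc_false : Fin.snoc ω false ∉ Blast (n + 1) := by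
  rintro ⟨h1, h2⟩
  have hw0 := walkWeak_nonneg ω n
  have hwm := walkWeak_le_mWeak ω (le_refl n)
  rw [mWeak_snoc] at h1
  have h1' : mWeak ω ≤ 1 := le_trans (le_max_left _ _) h1
  rw [walkWeak_snoc_last, stepf] at h2
  have : max (walkWeak ω n + -1) 0 = 0 := max_eq_right (by omega)
  omega

end mem

section probs
variable {p : ℝ} {n : ℕ}

lemma wt_nonneg (hp0 : 0 < p) (hp1 : p < 1) (ω : Fin n → Bool) : 0 ≤ wt p ω :=
  Finset.prod_nonneg fun i _ => by split <;> linarith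

lemma prob_succ (A : Set (Fin (n + 1) → Bool)) :
    prob p A = ∑ ω : Fin n → Bool,
      (A.indicator (wt p) (Fin.snoc ω false) + A.indicator (wt p) (Fin.snoc ω true)) :=
  sum_snoc_eq _

lemma ind_snoc (A : Set (Fin (n + 1) → Bool)) (B : Set (Fin n → Bool)) (b : Bool)
    (h : ∀ ω : Fin n → Bool, Fin.snoc ω b ∈ A ↔ ω ∈ B) (ω : Fin n → Bool) :
    A.indicator (wt p) (Fin.snoc ω b) = (if b then p else 1 - p) * B.indicator (wt p) ω := by
  classical
  rw [Set.indicator_apply, Set.indicator_apply]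
  by_cases hb : ω ∈ B
  · rw [if_pos ((h ω).2 hb), if_pos hb, wt_snoc]; ring
  · rw [if_neg (fun hh => hb ((h ω).1 hh)), if_neg hb, mul_zero]

lemma ind_snoc_zero (A : Set (Fin (n + 1) → Bool)) (b : Bool)
    (h : ∀ ω : Fin n → Bool, Fin.snoc ω b ∉ A) (ω : Fin n → Bool) :
    A.indicator (wt p) (Fin.snoc ω b) = 0 :=
  Set.indicator_of_notMem (h ω) _

lemma prob_A_succ : prob p (Alast (n + 1)) = (1 - p) * prob p (Cset n) := by
  rw [prob_succ]
  have : ∀ ω : Fin n → Bool,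
      (Alast (n+1)).indicator (wt p) (Fin.snoc ω false)
        + (Alast (n+1)).indicator (wt p) (Fin.snoc ω true)
      = (1 - p) * (Cset n).indicator (wt p) ω := by
    intro ω
    rw [ind_snoc _ (Cset n) false (fun ω => memA_snoc_false ω),
      ind_snoc_zero _ true (fun ω => memA_snoc_true ω)]
    simp
  rw [Finset.sum_congr rfl fun ω _ => this ω, ← Finset.mul_sum]
  rfl

lemma prob_B_succ : prob p (Blast (n + 1)) = p * prob p (Alast n) := by
  rw [prob_succ]
  have : ∀ ω : Fin n → Bool,
      (Blast (n+1)).indicator (wt p) (Fin.snoc ω false)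
        + (Blast (n+1)).indicator (wt p) (Fin.snoc ω true)
      = p * (Alast n).indicator (wt p) ω := by
    intro ω
    rw [ind_snoc _ (Alast n) true (fun ω => memB_snoc_true ω),
      ind_snoc_zero _ false (fun ω => memB_snoc_false ω)]
    simp
  rw [Finset.sum_congr rfl fun ω _ => this ω, ← Finset.mul_sum]
  rfl

lemma mWeak_zero_dim (ω : Fin 0 → Bool) : mWeak ω = 0 := by
  simp [mWeak]
  rfl

lemma prob_A_zero : prob p (Alast 0) = 1 := by
  have : ∀ ω : Fin 0 → Bool, ω ∈ Alast 0 := fun ω => ⟨by rw [mWeak_zero_dim]; norm_num, rfl⟩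
  unfold prob
  rw [Finset.sum_congr rfl fun ω _ => Set.indicator_of_mem (this ω) _]
  simp [wt]

lemma prob_B_zero : prob p (Blast 0) = 0 := by
  have : ∀ ω : Fin 0 → Bool, ω ∉ Blast 0 := by
    rintro ω ⟨-, h⟩
    simp [walkWeak] at h
  unfold prob
  rw [Finset.sum_congr rfl fun ω _ => Set.indicator_of_notMem (this ω) _]
  simp

lemma prob_C_split : prob p (Cset n) = prob p (Alast n) + prob p (Blast n) := by
  unfold prob
  rw [← Finset.sum_add_distrib]
  refine Finset.sum_congr rfl fun ω _ => ?_
  have hw0 := walkWeak_nonneg ω n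
  have hwm := walkWeak_le_mWeak ω (le_refl n)
  by_cases h : mWeak ω ≤ 1
  · have hw : walkWeak ω n = 0 ∨ walkWeak ω n = 1 := by omega
    rw [Set.indicator_of_mem (show ω ∈ Cset n from h) _]
    rcases hw with hw | hw
    · rw [Set.indicator_of_mem (show ω ∈ Alast n from ⟨h, hw⟩) _,
        Set.indicator_of_notMem (show ω ∉ Blast n from fun hh => by
          have := hh.2; omega) _]
      ring
    · rw [Set.indicator_of_mem (show ω ∈ Blast n from ⟨h, hw⟩) _,
        Set.indicator_of_notMem (show ω ∉ Alast n from fun hh => by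
          have := hh.2; omega) _]
      ring
  · rw [Set.indicator_of_notMem (show ω ∉ Cset n from h) _,
      Set.indicator_of_notMem (show ω ∉ Alast n from fun hh => h hh.1) _,
      Set.indicator_of_notMem (show ω ∉ Blast n from fun hh => h hh.1) _]
    ring

end probs

section probs2
variable {p : ℝ} {n : ℕ}

lemma walkWeak_const_false : ∀ j, walkWeak (fun _ : Fin n => false) j = 0
  | 0 => rfl
  | j + 1 => by
    show max _ 0 = 0
    rw [walkWeak_const_false j]
    by_cases h : j < n
    · rw [dif_pos h, stepf]; decide
    · rw [dif_neg h]; decide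

lemma mWeak_eq_zero_iff (ω : Fin n → Bool) : mWeak ω = 0 ↔ ω = fun _ => false := by
  constructor
  · intro h
    have hall : ∀ j, j ≤ n → walkWeak ω j = 0 := fun j hj =>
      le_antisymm (h ▸ walkWeak_le_mWeak ω hj) (walkWeak_nonneg ω j)
    funext i
    cases hb : ω i with
    | false => rfl
    | true =>
      exfalso
      have h1 : walkWeak ω (i.val + 1) = max (walkWeak ω i.val + step (ω ⟨i.val, i.isLt⟩)) 0 := by
        show max _ 0 = _
        rw [dif_pos i.isLt]
      have h2 : ω ⟨i.val, i.isLt⟩ = true := by rw [Fin.eta]; exact hb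
      rw [h2, stept, hall i.val (le_of_lt i.isLt)] at h1
      have h3 := hall (i.val + 1) i.isLt
      omega
  · rintro rfl
    apply le_antisymm
    · apply Finset.sup'_le
      intro j _
      rw [walkWeak_const_false j]
    · exact mWeak_nonneg _

lemma prob_M0 (hp0 : 0 < p) (hp1 : p < 1) :
    prob p {ω : Fin n → Bool | mWeak ω = 0} = (1 - p) ^ n := by
  classical
  unfold prob
  have : ∀ ω : Fin n → Bool,
      ({ω : Fin n → Bool | mWeak ω = 0}).indicator (wt p) ω
        = if ω = (fun _ => false) then wt p ω else 0 := by
    intro ω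
    rw [Set.indicator_apply]
    congr 1
    simp only [Set.mem_setOf_eq, eq_iff_iff]
    exact mWeak_eq_zero_iff ω
  rw [Finset.sum_congr rfl fun ω _ => this ω, Finset.sum_ite_eq' Finset.univ (fun _ => false)]
  rw [if_pos (Finset.mem_univ _)]
  simp [wt]

lemma prob_C_split' : prob p (Cset n)
    = prob p {ω : Fin n → Bool | mWeak ω = 0} + prob p {ω : Fin n → Bool | mWeak ω = 1} := by
  unfold prob
  rw [← Finset.sum_add_distrib]
  refine Finset.sum_congr rfl fun ω _ => ?_
  have hm0 := mWeak_nonneg ω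
  by_cases h : mWeak ω ≤ 1
  · rw [Set.indicator_of_mem (show ω ∈ Cset n from h) _]
    rcases (show mWeak ω = 0 ∨ mWeak ω = 1 by omega) with hw | hw
    · rw [Set.indicator_of_mem (show ω ∈ {ω : Fin n → Bool | mWeak ω = 0} from hw) _,
        Set.indicator_of_notMem (show ω ∉ {ω : Fin n → Bool | mWeak ω = 1} from by
          simp only [Set.mem_setOf_eq]; omega) _]
      ring
    · rw [Set.indicator_of_mem (show ω ∈ {ω : Fin n → Bool | mWeak ω = 1} from hw) _,
        Set.indicator_of_notMem (show ω ∉ {ω : Fin n → Bool | mWeak ω = 0} from by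
          simp only [Set.mem_setOf_eq]; omega) _]
      ring
  · rw [Set.indicator_of_notMem (show ω ∉ Cset n from h) _,
      Set.indicator_of_notMem (show ω ∉ {ω : Fin n → Bool | mWeak ω = 0} from by
        simp only [Set.mem_setOf_eq]; omega) _,
      Set.indicator_of_notMem (show ω ∉ {ω : Fin n → Bool | mWeak ω = 1} from by
        simp only [Set.mem_setOf_eq]; omega) _]
    ring

lemma prob_M1 (hp0 : 0 < p) (hp1 : p < 1) :
    prob p {ω : Fin n → Bool | mWeak ω = 1} = prob p (Cset n) - (1 - p) ^ n := by
  rw [prob_C_split', prob_M0 hp0 hp1]; ring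

lemma prob_nonneg (hp0 : 0 < p) (hp1 : p < 1) (A : Set (Fin n → Bool)) : 0 ≤ prob p A :=
  Finset.sum_nonneg fun ω _ => Set.indicator_nonneg (fun ω _ => wt_nonneg hp0 hp1 ω) ω

lemma prob_univ (hp0 : 0 < p) (hp1 : p < 1) :
    prob p (Set.univ : Set (Fin n → Bool)) = 1 := by
  induction n with
  | zero =>
    unfold prob
    rw [Finset.sum_congr rfl fun ω _ => Set.indicator_of_mem (Set.mem_univ ω) _]
    simp [wt]
  | succ n ih =>
    rw [prob_succ]
    have : ∀ ω : Fin n → Bool,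
        (Set.univ : Set (Fin (n+1) → Bool)).indicator (wt p) (Fin.snoc ω false)
          + (Set.univ : Set (Fin (n+1) → Bool)).indicator (wt p) (Fin.snoc ω true)
        = (Set.univ : Set (Fin n → Bool)).indicator (wt p) ω := by
      intro ω
      rw [Set.indicator_of_mem (Set.mem_univ _) _, Set.indicator_of_mem (Set.mem_univ _) _,
        Set.indicator_of_mem (Set.mem_univ _) _, wt_snoc, wt_snoc]
      simp; ring
    rw [Finset.sum_congr rfl fun ω _ => this ω]
    exact ih

lemma prob_le_one (hp0 : 0 < p) (hp1 : p < 1) (A : Set (Fin n → Bool)) : prob p A ≤ 1 := by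
  rw [← prob_univ hp0 hp1 (n := n)]
  apply Finset.sum_le_sum
  intro ω _
  rw [Set.indicator_of_mem (Set.mem_univ ω) _]
  exact Set.indicator_apply_le' (fun _ => le_refl _) (fun _ => wt_nonneg hp0 hp1 ω)

end probs2

theorem statement11 (p : ℝ) (hp0 : 0 < p) (hp1 : p < 1) (l : ℝ) (hl : |l| < 1) :
    HasSum (fun n : ℕ => l ^ (n + 1) * prob p {ω : Fin (n + 1) → Bool | mWeak ω = 1})
      (p * l / ((1 - (1 - p) * l) * (1 - (1 - p) * l - p * (1 - p) * l ^ 2))) := by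
  set q : ℝ := 1 - p with hq
  have hq0 : 0 < q := by simp [hq]; linarith
  have hq1 : q < 1 := by simp [hq]; linarith
  have hla := abs_nonneg l
  have hl1 : l ≤ |l| := le_abs_self l
  have hl2 : -|l| ≤ l := neg_abs_le l
  have hl3 : l ^ 2 = |l| ^ 2 := (sq_abs l).symm
  -- the sequence C
  set C : ℕ → ℝ := fun n => prob p (Cset n) with hCdef
  have hA0 : prob p (Alast 0) = 1 := prob_A_zero
  have hC0 : C 0 = 1 := by rw [hCdef]; simp only; rw [prob_C_split, prob_A_zero, prob_B_zero]; ring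
  have hC1 : C 1 = 1 := by
    rw [hCdef]; simp only
    rw [prob_C_split, prob_A_succ, prob_B_succ, prob_A_zero,
      show prob p (Cset 0) = 1 from hC0]; ring
  have hCrec : ∀ n, C (n + 2) = q * C (n + 1) + p * q * C n := by
    intro n
    show prob p (Cset (n+2)) = _
    rw [prob_C_split, prob_A_succ, prob_B_succ, prob_A_succ]
    ring
  have hCbd : ∀ n, |C n| ≤ 1 := by
    intro n
    rw [abs_of_nonneg (prob_nonneg hp0 hp1 _)]
    exact prob_le_one hp0 hp1 _
  -- summability
  have hsum : Summable (fun n => l ^ n * C n) := by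
    apply Summable.of_abs
    apply Summable.of_nonneg_of_le (fun n => abs_nonneg _)
      (fun n => ?_) (summable_geometric_of_abs_lt_one (r := |l|) (by rwa [abs_abs]))
    rw [abs_mul, abs_pow]
    calc |l| ^ n * |C n| ≤ |l| ^ n * 1 :=
          mul_le_mul_of_nonneg_left (hCbd n) (pow_nonneg hla n)
      _ = |l| ^ n := mul_one _
  set F : ℝ := ∑' n, l ^ n * C n with hF
  have hFsum : HasSum (fun n => l ^ n * C n) F := hsum.hasSum
  have hF1 : HasSum (fun n => l ^ (n + 1) * C (n + 1)) (F - 1) := by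
    apply (hasSum_nat_add_iff (f := fun n => l ^ n * C n) 1).2
    convert hFsum using 1
    · rfl
    simp [hC0]
  have hF2 : HasSum (fun n => l ^ (n + 2) * C (n + 2)) (F - 1 - l) := by
    apply (hasSum_nat_add_iff (f := fun n => l ^ n * C n) 2).2
    convert hFsum using 1
    · rfl
    rw [Finset.sum_range_succ, Finset.sum_range_one]
    simp [hC0, hC1]
    try ring
  -- recursion identity for F
  have hF2' : HasSum (fun n => l ^ (n + 2) * C (n + 2))
      (q * l * (F - 1) + p * q * l ^ 2 * F) := by
    have h := (hF1.mul_left (q * l)).add (hFsum.mul_left (p * q * l ^ 2))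
    convert h using 1
    · rfl
    funext n
    rw [hCrec n]
    ring
  have hFeq : F - 1 - l = q * l * (F - 1) + p * q * l ^ 2 * F := hF2.unique hF2'
  have e1 : q * l ≤ q * |l| := mul_le_mul_of_nonneg_left hl1 (le_of_lt hq0)
  have e2' : |l| ^ 2 ≤ |l| := by nlinarith
  have e2 : p * q * l ^ 2 ≤ p * q * |l| := by
    rw [hl3]
    nlinarith [mul_pos hp0 hq0]
  have e5 : q * |l| + p * q * |l| ≤ |l| := by
    rw [hq]
    nlinarith [sq_nonneg p]
  have e6 : q * |l| ≤ |l| := by nlinarith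
  have hD : (0:ℝ) < 1 - q * l - p * q * l ^ 2 := by linarith
  have hD1 : (0:ℝ) < 1 - q * l := by linarith
  -- geometric series for q^n
  have hgeo : HasSum (fun n => (q * l) ^ n) (1 - q * l)⁻¹ := by
    apply hasSum_geometric_of_abs_lt_one
    rw [abs_mul, abs_of_pos hq0]
    nlinarith
  have hgeo1 : HasSum (fun n => (q * l) ^ (n + 1)) ((1 - q * l)⁻¹ - 1) := by
    apply (hasSum_nat_add_iff (f := fun n => (q * l) ^ n) 1).2
    convert hgeo using 1
    · rfl
    simp
  -- assemble
  have hmain : HasSum (fun n : ℕ => l ^ (n + 1) * C (n + 1) - (q * l) ^ (n + 1))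
      ((F - 1) - ((1 - q * l)⁻¹ - 1)) := hF1.sub hgeo1
  have hfun : (fun n : ℕ => l ^ (n + 1) * prob p {ω : Fin (n + 1) → Bool | mWeak ω = 1})
      = fun n : ℕ => l ^ (n + 1) * C (n + 1) - (q * l) ^ (n + 1) := by
    funext n
    rw [prob_M1 hp0 hp1]
    show l ^ (n+1) * (C (n+1) - (1-p) ^ (n+1)) = _
    rw [← hq, mul_pow]
    ring
  rw [hfun]
  convert hmain using 1
  have hF' : F = (1 + p * l) / (1 - q * l - p * q * l ^ 2) := by
    rw [eq_div_iff (ne_of_gt hD)]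
    linear_combination hFeq - l * hq
  rw [hF']
  have hD' := hD.ne'
  have hD1' := hD1.ne'
  rw [div_sub_one hD', inv_eq_one_div, div_sub_one hD1', div_sub_div _ _ hD' hD1', div_eq_div_iff (mul_ne_zero hD1' hD') (mul_ne_zero hD' hD1')]
  ring
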